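/- For all positive reals a_1 ≤ a_2 ≤ ... ≤ a_{k+1} and all natural numbers k ≥ 1, (∑_{i=1}^{k+1} a_i)^{2^{k-1}} ≥ 2^{2^k - 1} · √(a_1) · ∏_{i=1}^{k} a_{i+1}^{2^{i-2}}. -/

import Mathlib

lemma amgm_sq (x y : ℝ) : 4 * (x * y) ≤ (x + y) ^ 2 := by nlinarith [sq_nonneg (x - y)]

theorem generalized_star_ineq (k : ℕ) (hk : 1 ≤ k) (a : ℕ → ℝ)
    (hpos : ∀ i ∈ Finset.Icc 1 (k + 1), 0 < a i)
    (hmono : ∀ i j, 1 ≤ i → i ≤ j → j ≤ k + 1 → a i ≤ a j) :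
    (∑ i ∈ Finset.Icc 1 (k + 1), a i) ^ (2 ^ (k - 1))
      ≥ 2 ^ (2 ^ k - 1) * Real.sqrt (a 1)
        * ∏ i ∈ Finset.Icc 1 k, a (i + 1) ^ ((2 : ℝ) ^ ((i : ℤ) - 2)) := by
  clear hmono
  revert hpos
  induction k, hk using Nat.le_induction with
  | base =>
    intro hpos
    have h1 : 0 < a 1 := hpos 1 (by decide)
    have h2 : 0 < a 2 := hpos 2 (by decide)
    have e2 : a 2 ^ ((2:ℝ) ^ ((1:ℤ) - 2)) = Real.sqrt (a 2) := by
      rw [show ((2:ℝ) ^ ((1:ℤ) - 2)) = (1/2 : ℝ) by norm_num, ← Real.sqrt_eq_rpow]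
    have hsum : Finset.Icc 1 (1 + 1) = {1, 2} := by decide
    simp only [hsum, Finset.Icc_self, Finset.prod_singleton, Nat.cast_one, e2]
    rw [Finset.sum_insert (by decide), Finset.sum_singleton]
    have s1 := Real.sq_sqrt h1.le
    have s2 := Real.sq_sqrt h2.le
    have n1 := Real.sqrt_nonneg (a 1)
    have n2 := Real.sqrt_nonneg (a 2)
    norm_num
    nlinarith [sq_nonneg (Real.sqrt (a 1) - Real.sqrt (a 2))]
  | succ k hk ih =>
    intro hpos
    have hpos' : ∀ i ∈ Finset.Icc 1 (k + 1), 0 < a i := by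
      intro i hi
      exact hpos i (Finset.mem_Icc.mpr ⟨(Finset.mem_Icc.mp hi).1, by
        have := (Finset.mem_Icc.mp hi).2; omega⟩)
    have IH := ih hpos'
    have hp2 : 2 * 2 ^ (k - 1) = 2 ^ k := by rw [← pow_succ' 2 (k-1)]; congr 1; omega
    set S := ∑ i ∈ Finset.Icc 1 (k + 1), a i with hSdef
    have hb : 0 < a (k + 2) := hpos (k + 2) (Finset.mem_Icc.mpr ⟨by omega, by omega⟩)
    have hS : 0 < S := Finset.sum_pos hpos' ⟨1, Finset.mem_Icc.mpr ⟨le_refl _, by omega⟩⟩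
    have hsum : ∑ i ∈ Finset.Icc 1 (k + 2), a i = S + a (k + 2) := by
      rw [hSdef, ← Finset.sum_Icc_succ_top (by omega : 1 ≤ k + 2)]
    have hprod : ∏ i ∈ Finset.Icc 1 (k + 1), a (i + 1) ^ ((2 : ℝ) ^ ((i : ℤ) - 2))
        = (∏ i ∈ Finset.Icc 1 k, a (i + 1) ^ ((2 : ℝ) ^ ((i : ℤ) - 2)))
          * a (k + 2) ^ ((2 : ℝ) ^ (((k + 1 : ℕ) : ℤ) - 2)) := by
      rw [Finset.prod_Icc_succ_top (by omega : 1 ≤ k + 1)]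
    have hexp : a (k + 2) ^ ((2 : ℝ) ^ (((k + 1 : ℕ) : ℤ) - 2)) = a (k + 2) ^ (2 ^ (k - 1)) := by
      rw [show ((k + 1 : ℕ) : ℤ) - 2 = ((k - 1 : ℕ) : ℤ) by omega, zpow_natCast,
        show ((2:ℝ) ^ (k-1)) = (((2 ^ (k-1) : ℕ)) : ℝ) by push_cast; ring,
        Real.rpow_natCast]
    rw [hsum, hprod, hexp, show (k + 1) - 1 = k from rfl]
    -- main chain
    have step1 : ((S + a (k+2)) ^ 2) ^ (2 ^ (k-1)) ≥ (4 * (S * a (k+2))) ^ (2 ^ (k-1)) :=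
      pow_le_pow_left₀ (by positivity) (amgm_sq S (a (k+2))) _
    have e1 : ((S + a (k+2)) ^ 2) ^ (2 ^ (k-1)) = (S + a (k+2)) ^ (2 ^ k) := by
      rw [← pow_mul, hp2]
    have e2 : (4 * (S * a (k+2))) ^ (2 ^ (k-1))
        = (4:ℝ) ^ (2 ^ (k-1)) * S ^ (2 ^ (k-1)) * a (k+2) ^ (2 ^ (k-1)) := by
      rw [mul_pow, mul_pow]; ring
    have step2 : (4:ℝ) ^ (2 ^ (k-1)) * S ^ (2 ^ (k-1)) * a (k+2) ^ (2 ^ (k-1))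
        ≥ (4:ℝ) ^ (2 ^ (k-1)) * (2 ^ (2 ^ k - 1) * Real.sqrt (a 1)
            * ∏ i ∈ Finset.Icc 1 k, a (i + 1) ^ ((2 : ℝ) ^ ((i : ℤ) - 2)))
          * a (k+2) ^ (2 ^ (k-1)) := by
      apply mul_le_mul_of_nonneg_right _ (by positivity)
      exact mul_le_mul_of_nonneg_left IH (by positivity)
    have e3 : (4:ℝ) ^ (2 ^ (k-1)) * (2 ^ (2 ^ k - 1) * Real.sqrt (a 1)
            * ∏ i ∈ Finset.Icc 1 k, a (i + 1) ^ ((2 : ℝ) ^ ((i : ℤ) - 2)))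
          * a (k+2) ^ (2 ^ (k-1))
        = 2 ^ (2 ^ (k+1) - 1) * Real.sqrt (a 1)
          * ((∏ i ∈ Finset.Icc 1 k, a (i + 1) ^ ((2 : ℝ) ^ ((i : ℤ) - 2)))
            * a (k+2) ^ (2 ^ (k-1))) := by
      have c4 : (4:ℝ) ^ (2 ^ (k-1)) = 2 ^ (2 ^ k) := by
        rw [show (4:ℝ) = 2 ^ 2 by norm_num, ← pow_mul, hp2]
      rw [c4, show (2:ℝ) ^ (2 ^ (k+1) - 1) = 2 ^ (2 ^ k) * 2 ^ (2 ^ k - 1) by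
        rw [← pow_add]; congr 1
        have : 1 ≤ 2 ^ k := Nat.one_le_two_pow
        have : 2 ^ (k+1) = 2 * 2 ^ k := by rw [pow_succ]; ring
        omega]
      ring
    calc (S + a (k+2)) ^ (2 ^ k) = ((S + a (k+2)) ^ 2) ^ (2 ^ (k-1)) := e1.symm
      _ ≥ (4 * (S * a (k+2))) ^ (2 ^ (k-1)) := step1
      _ = _ := e2
      _ ≥ _ := step2
      _ = _ := e3
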